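/- For all natural numbers n, k, l with k + l ≥ 1, there exists a multivariate polynomial P with real coefficients in variables p_{αβ} indexed by unordered pairs of distinct elements α, β of Fin n, such that P is of (weighted) total degree at most k + l + 1 in these variables and, for every κ : Fin n → ℝ, evaluating P at p_{αβ} = κ_α · κ_β gives σ_{2k+1}(κ) · σ_{2l+1}(κ). -/

import Mathlib

/-- The `m`-th elementary symmetric function of the family `κ : Fin n → ℝ`:
the sum over all `m`-element subsets `S` of `Fin n` of `∏ i ∈ S, κ i`. -/
noncomputable def esymmFun (n m : ℕ) (κ : Fin n → ℝ) : ℝ :=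
  ∑ S ∈ Finset.powersetCard m (Finset.univ : Finset (Fin n)), ∏ i ∈ S, κ i

/-- Any multiset of `2m` indices, each occurring at most twice, with `m ≥ 2`,
has its `κ`-product expressible as a polynomial of degree `m` in the pairwise
products `κ a * κ b`, `a ≠ b`. -/
lemma aux_monomial {n : ℕ} (m : ℕ) (hm : 2 ≤ m) (M : Multiset (Fin n))
    (hcard : Multiset.card M = 2 * m) (hcount : ∀ a, M.count a ≤ 2) :
    ∃ Q : MvPolynomial {p : Sym2 (Fin n) // ¬ p.IsDiag} ℝ,
      Q.totalDegree ≤ m ∧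
      ∀ κ : Fin n → ℝ,
        MvPolynomial.eval
          (fun q : {p : Sym2 (Fin n) // ¬ p.IsDiag} =>
            Sym2.lift ⟨fun a b => κ a * κ b, fun a b => mul_comm (κ a) (κ b)⟩ q.1) Q =
        (M.map κ).prod := by
  classical
  set L : List (Fin n) := Multiset.sort M (· ≤ ·) with hLdef
  have hsort : L.Pairwise (· ≤ ·) := Multiset.pairwise_sort _ _
  have hML : (L : Multiset (Fin n)) = M := Multiset.sort_eq _ _
  have hlen : L.length = 2 * m := by rw [hLdef, Multiset.length_sort, hcard]
  have h1 : ∀ i : ℕ, i < m → i < L.length := by omega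
  have h2 : ∀ i : ℕ, i < m → m + i < L.length := by omega
  -- the two endpoints of each pair are distinct
  have hne : ∀ (i : ℕ) (hi : i < m),
      L.get ⟨i, h1 i hi⟩ ≠ L.get ⟨m + i, h2 i hi⟩ := by
    intro i hi heq
    set a := L.get ⟨i, h1 i hi⟩ with ha
    have key : ∀ (j : ℕ) (hj : j < L.length), i ≤ j → j ≤ m + i → L.get ⟨j, hj⟩ = a := by
      intro j hj hij hji
      have hle1 : a ≤ L.get ⟨j, hj⟩ := by
        rcases eq_or_lt_of_le hij with h | h
        · subst h; exact le_of_eq ha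
        · exact hsort.rel_get_of_lt (by simpa using h)
      have hle2 : L.get ⟨j, hj⟩ ≤ a := by
        rcases eq_or_lt_of_le hji with h | h
        · subst h; rw [← heq]
        · rw [heq]; exact hsort.rel_get_of_lt (by simpa using h)
      exact le_antisymm hle2 hle1
    -- the sublist [a,a,a]
    have hT : (L.drop i).take 3 = [a, a, a] := by
      apply List.ext_get
      · simp only [List.length_take, List.length_drop, List.length_cons, List.length_nil]
        omega
      · intro j hj1 hj2
        have hj3 : j < 3 := by
          simp only [List.length_take, List.length_drop] at hj1; omega
        have hij : i + j < L.length := by omega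
        have : ((L.drop i).take 3).get ⟨j, hj1⟩ = L.get ⟨i + j, hij⟩ := by
          simp [List.get_eq_getElem, List.getElem_take, List.getElem_drop]
        rw [this, key (i + j) hij (by omega) (by omega)]
        interval_cases j <;> rfl
    have hsub : [a, a, a].Sublist L := by
      rw [← hT]
      exact ((L.drop i).take_sublist 3).trans (L.drop_sublist i)
    have h3 : 3 ≤ List.count a L := by
      have := hsub.count_le a
      simpa using this
    have : List.count a L = M.count a := by
      rw [← hML]; simp
    have := hcount a
    omega
  -- the monomial
  refine ⟨∏ i ∈ (Finset.range m).attach, MvPolynomial.X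
      ⟨s(L.get ⟨i.1, h1 i.1 (Finset.mem_range.mp i.2)⟩,
         L.get ⟨m + i.1, h2 i.1 (Finset.mem_range.mp i.2)⟩),
        fun hd => hne i.1 (Finset.mem_range.mp i.2) (Sym2.mk_isDiag_iff.mp hd)⟩, ?_, ?_⟩
  · refine le_trans (MvPolynomial.totalDegree_finset_prod _ _) ?_
    simp [MvPolynomial.totalDegree_X]
  · intro κ
    -- default element
    have hM0 : M ≠ 0 := by
      intro h; rw [h] at hcard; simp at hcard; omega
    obtain ⟨a0, _⟩ := Multiset.exists_mem_of_ne_zero hM0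
    set g : ℕ → Fin n := fun i => L.getD i a0 with hg
    have hget : ∀ (i : ℕ) (h : i < L.length), L.get ⟨i, h⟩ = g i := by
      intro i h
      simp [hg, List.getD_eq_getElem, h, List.get_eq_getElem]
    rw [map_prod]
    simp only [MvPolynomial.eval_X, Sym2.lift_mk, Sym2.lift_mk, hget]
    rw [Finset.prod_attach (Finset.range m) (fun i => κ (g i) * κ (g (m + i)))]
    rw [Finset.prod_mul_distrib]
    -- RHS
    rw [← hML, Multiset.map_coe, Multiset.prod_coe]
    conv_rhs => rw [← List.ofFn_get (L.map κ)]
    rw [List.prod_ofFn]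
    have hlm : (L.map κ).length = L.length := L.length_map κ
    have : ∀ j : Fin (L.map κ).length, (L.map κ).get j = κ (g j.1) := by
      intro j
      rw [List.get_eq_getElem, List.getElem_map]
      congr 1
      exact hget j.1 (by omega)
    rw [Fintype.prod_congr _ _ this]
    have : ∏ j : Fin (L.map κ).length, κ (g j.1) = ∏ j ∈ Finset.range (2 * m), κ (g j) := by
      rw [Fin.prod_univ_eq_prod_range (fun j => κ (g j)), hlm, hlen]
    rw [this, two_mul, Finset.prod_range_add]

theorem stmt_2 (n k l : ℕ) (hkl : 1 ≤ k + l) :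
    ∃ P : MvPolynomial {p : Sym2 (Fin n) // ¬ p.IsDiag} ℝ,
      P.totalDegree ≤ k + l + 1 ∧
      ∀ κ : Fin n → ℝ,
        MvPolynomial.eval
          (fun q : {p : Sym2 (Fin n) // ¬ p.IsDiag} =>
            Sym2.lift ⟨fun a b => κ a * κ b, fun a b => mul_comm (κ a) (κ b)⟩ q.1) P =
        esymmFun n (2 * k + 1) κ * esymmFun n (2 * l + 1) κ := by
  classical
  set m := k + l + 1 with hmdef
  have hm2 : 2 ≤ m := by omega
  set A := Finset.powersetCard (2 * k + 1) (Finset.univ : Finset (Fin n)) with hA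
  set B := Finset.powersetCard (2 * l + 1) (Finset.univ : Finset (Fin n)) with hB
  have hcard : ∀ p : {x // x ∈ A ×ˢ B}, Multiset.card (p.1.1.val + p.1.2.val) = 2 * m := by
    rintro ⟨⟨S, T⟩, hp⟩
    dsimp only
    rw [Finset.mem_product] at hp
    have h1 := (Finset.mem_powersetCard.mp hp.1).2
    have h2 := (Finset.mem_powersetCard.mp hp.2).2
    rw [Multiset.card_add]
    rw [Finset.card_def] at h1 h2
    dsimp only at h1 h2
    omega
  have hcnt : ∀ p : {x // x ∈ A ×ˢ B}, ∀ a, (p.1.1.val + p.1.2.val).count a ≤ 2 := by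
    rintro ⟨⟨S, T⟩, hp⟩ a
    dsimp only
    rw [Multiset.count_add]
    have h1 := Multiset.nodup_iff_count_le_one.mp S.nodup a
    have h2 := Multiset.nodup_iff_count_le_one.mp T.nodup a
    omega
  choose Q hQdeg hQeval using fun p : {x // x ∈ A ×ˢ B} =>
    aux_monomial m hm2 (p.1.1.val + p.1.2.val) (hcard p) (hcnt p)
  refine ⟨∑ p ∈ (A ×ˢ B).attach, Q p, ?_, ?_⟩
  · exact le_trans (MvPolynomial.totalDegree_finset_sum _ _)
      (Finset.sup_le fun p _ => hQdeg p)
  · intro κ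
    rw [map_sum]
    simp only [hQeval]
    rw [Finset.sum_attach (A ×ˢ B) (fun p => ((p.1.val + p.2.val).map κ).prod)]
    unfold esymmFun
    rw [← hA, ← hB, Finset.sum_mul_sum, ← Finset.sum_product']
    apply Finset.sum_congr rfl
    rintro ⟨S, T⟩ _
    rw [Multiset.map_add, Multiset.prod_add]
    rw [Finset.prod_eq_multiset_prod, Finset.prod_eq_multiset_prod]
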